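/- A polynomial function f : ℕ → ℕ with coefficients in ℕ ∪ {0} (mapping positive naturals to positive naturals) is continuous as a map from the Macías space M(ℕ) to itself if and only if f has the form f(x) = a·x^n for some a ∈ ℕ and n ∈ ℕ ∪ {0}. -/

import Mathlib

open Topology

/-- For `n` a positive natural, `σ_n = {m ∈ ℕ⁺ : gcd(n,m) = 1}`. -/
def sigmaSet (n : ℕ+) : Set ℕ+ := {m : ℕ+ | Nat.Coprime (n : ℕ) (m : ℕ)}

/-- The Macías topology `τ_M` on the positive naturals, generated by the sets `σ_n`. -/
def tauM : TopologicalSpace ℕ+ :=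
  TopologicalSpace.generateFrom (Set.range sigmaSet)

/-- `f : ℕ⁺ → ℕ⁺` is a polynomial function with coefficients in `ℕ ∪ {0}`. -/
def IsPolyFun (f : ℕ+ → ℕ+) : Prop :=
  ∃ (n : ℕ) (a : ℕ → ℕ),
    ∀ x : ℕ+, (f x : ℕ) = ∑ k ∈ Finset.range (n + 1), a k * (x : ℕ) ^ k

lemma sigmaSet_mul (a b : ℕ+) : sigmaSet (a * b) = sigmaSet a ∩ sigmaSet b := by
  ext m
  simp [sigmaSet, PNat.mul_coe, Nat.coprime_mul_iff_left, Set.mem_inter_iff]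

lemma isOpen_sigmaSet (n : ℕ+) : IsOpen[tauM] (sigmaSet n) :=
  TopologicalSpace.GenerateOpen.basic _ ⟨n, rfl⟩

lemma exists_sigma_subset_aux :
    ∀ {U : Set ℕ+}, TopologicalSpace.GenerateOpen (Set.range sigmaSet) U →
      (1 : ℕ+) ∈ U → ∃ N : ℕ+, sigmaSet N ⊆ U := by
  intro U hU
  induction hU with
  | basic s hs => intro _; obtain ⟨N, rfl⟩ := hs; exact ⟨N, subset_rfl⟩
  | univ => intro _; exact ⟨1, fun _ _ => trivial⟩
  | inter s t _ _ ihs iht =>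
      intro h1
      obtain ⟨N1, h1s⟩ := ihs h1.1
      obtain ⟨N2, h2s⟩ := iht h1.2
      exact ⟨N1 * N2, by rw [sigmaSet_mul]; exact Set.inter_subset_inter h1s h2s⟩
  | sUnion S _ ih =>
      intro h1
      obtain ⟨s, hsS, hmem⟩ := h1
      obtain ⟨N, hN⟩ := ih s hsS hmem
      exact ⟨N, hN.trans (Set.subset_sUnion_of_mem hsS)⟩

lemma exists_sigma_subset {U : Set ℕ+} (hU : IsOpen[tauM] U) (h1 : (1 : ℕ+) ∈ U) :
    ∃ N : ℕ+, sigmaSet N ⊆ U :=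
  exists_sigma_subset_aux hU h1

lemma modEq_sum {p : ℕ} (s : Finset ℕ) (g h : ℕ → ℕ) (H : ∀ i ∈ s, g i ≡ h i [MOD p]) :
    ∑ i ∈ s, g i ≡ ∑ i ∈ s, h i [MOD p] := by
  classical
  induction s using Finset.induction_on with
  | empty => exact Nat.ModEq.refl 0
  | insert _ _ hx ih =>
      rw [Finset.sum_insert hx, Finset.sum_insert hx]
      exact (H _ (Finset.mem_insert_self _ _)).add
        (ih fun i hi => H i (Finset.mem_insert_of_mem hi))

theorem poly_continuous_iff_monomial (f : ℕ+ → ℕ+) (hf : IsPolyFun f) :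
    Continuous[tauM, tauM] f ↔ ∃ (a : ℕ+) (n : ℕ), ∀ x : ℕ+, f x = a * x ^ n := by
  obtain ⟨d, a, ha⟩ := hf
  constructor
  · intro hcont
    -- there is a nonzero coefficient
    have hex : ∃ k, k ≤ d ∧ a k ≠ 0 := by
      by_contra h
      push_neg at h
      have h1 := ha 1
      simp only [PNat.one_coe, one_pow, mul_one] at h1
      have hz : ∑ k ∈ Finset.range (d + 1), a k = 0 :=
        Finset.sum_eq_zero fun k hk => h k (Nat.lt_succ_iff.mp (Finset.mem_range.mp hk))
      rw [hz] at h1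
      exact (f 1).2.ne' h1
    have hex' : ∃ k, a k ≠ 0 := ⟨hex.choose, hex.choose_spec.2⟩
    set n := Nat.find hex' with hndef
    have hn : a n ≠ 0 := Nat.find_spec hex'
    have hmin : ∀ k, k < n → a k = 0 := fun k hk => by
      have := Nat.find_min hex' hk
      simpa using this
    have hnd : n ≤ d := le_trans (Nat.find_min' hex' hex.choose_spec.2) hex.choose_spec.1
    by_cases hone : ∀ j, n < j → j ≤ d → a j = 0
    · -- monomial case
      refine ⟨⟨a n, Nat.pos_of_ne_zero hn⟩, n, fun x => ?_⟩
      apply PNat.coe_injective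
      show (f x : ℕ) = a n * (x : ℕ) ^ n
      rw [ha x]
      apply Finset.sum_eq_single_of_mem n (Finset.mem_range.mpr (by omega))
      intro k hk hkn
      rcases lt_or_gt_of_ne hkn with h | h
      · rw [hmin k h, zero_mul]
      · rw [hone k h (by have := Finset.mem_range.mp hk; omega), zero_mul]
    · -- contradiction case
      exfalso
      push_neg at hone
      obtain ⟨j, hnj, hjd, haj⟩ := hone
      set c := a n with hc
      have hcpos : 0 < c := Nat.pos_of_ne_zero hn
      set F1 := ((f 1 : ℕ+) : ℕ) with hF1def
      have hF1pos : 0 < F1 := (f 1).2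
      set X := c * c * F1 with hX
      have hXpos : 0 < X := Nat.mul_pos (Nat.mul_pos hcpos hcpos) hF1pos
      set x₀ : ℕ+ := ⟨X, hXpos⟩ with hx₀
      set w := ∑ i ∈ Finset.range (d - n), a (n + 1 + i) * X ^ i with hw
      have key : ((f x₀ : ℕ+) : ℕ) = c * X ^ n + X ^ (n + 1) * w := by
        rw [ha x₀]
        have hXcoe : ((x₀ : ℕ+) : ℕ) = X := rfl
        rw [hXcoe]
        rw [← Finset.sum_range_add_sum_Ico (fun k => a k * X ^ k) (by omega : n ≤ d + 1)]
        rw [Finset.sum_eq_zero (fun k hk => by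
          rw [hmin k (Finset.mem_range.mp hk), zero_mul]), zero_add]
        rw [Finset.sum_eq_sum_Ico_succ_bot (by omega : n < d + 1)]
        congr 1
        rw [Finset.sum_Ico_eq_sum_range]
        have hdn : d + 1 - (n + 1) = d - n := by omega
        rw [hdn, Finset.mul_sum]
        apply Finset.sum_congr rfl
        intro k _
        rw [pow_add]
        ring
      have hwpos : 0 < w := by
        have hmem : j - n - 1 ∈ Finset.range (d - n) := Finset.mem_range.mpr (by omega)
        have hterm : 0 < a (n + 1 + (j - n - 1)) * X ^ (j - n - 1) := by
          have hj' : n + 1 + (j - n - 1) = j := by omega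
          rw [hj']
          exact Nat.mul_pos (Nat.pos_of_ne_zero haj) (pow_pos hXpos _)
        calc 0 < a (n + 1 + (j - n - 1)) * X ^ (j - n - 1) := hterm
          _ ≤ w := Finset.single_le_sum (f := fun i => a (n + 1 + i) * X ^ i)
              (fun i _ => Nat.zero_le _) hmem
      set m := 1 + c * F1 * w with hm
      have hfx0 : ((f x₀ : ℕ+) : ℕ) = X ^ n * (c * m) := by
        rw [key, hm]
        have hXs : X ^ (n + 1) = X ^ n * X := pow_succ X n
        rw [hXs, hX]
        ring
      have hm2 : 2 ≤ m := by
        have h1 : 0 < c * F1 * w := Nat.mul_pos (Nat.mul_pos hcpos hF1pos) hwpos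
        omega
      set p := m.minFac with hpdef
      have hp : p.Prime := Nat.minFac_prime (by omega)
      have hpm : p ∣ m := Nat.minFac_dvd m
      have hpnot : ¬ p ∣ c * F1 * w := by
        intro hdvd
        have hsub := Nat.dvd_sub hpm hdvd
        have h1 : m - c * F1 * w = 1 := by omega
        rw [h1] at hsub
        exact hp.ne_one (Nat.dvd_one.mp hsub)
      have hpc : ¬ p ∣ c := fun h => hpnot ((h.mul_right F1).mul_right w)
      have hpF1 : ¬ p ∣ F1 := fun h => hpnot ((h.mul_left c).mul_right w)
      have hpX : ¬ p ∣ X := by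
        intro h
        rcases (Nat.Prime.dvd_mul hp).mp h with h' | h'
        · rcases (Nat.Prime.dvd_mul hp).mp h' with h'' | h'' <;> exact hpc h''
        · exact hpF1 h'
      have hpfx0 : p ∣ ((f x₀ : ℕ+) : ℕ) := by
        rw [hfx0]
        exact (hpm.mul_left c).mul_left (X ^ n)
      set pP : ℕ+ := ⟨p, hp.pos⟩ with hpP
      have hopen : IsOpen[tauM] (f ⁻¹' sigmaSet pP) :=
        continuous_def.mp hcont _ (isOpen_sigmaSet pP)
      have h1mem : (1 : ℕ+) ∈ f ⁻¹' sigmaSet pP := by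
        show Nat.Coprime ((pP : ℕ+) : ℕ) ((f 1 : ℕ+) : ℕ)
        exact (Nat.Prime.coprime_iff_not_dvd hp).mpr hpF1
      obtain ⟨N, hN⟩ := exists_sigma_subset hopen h1mem
      set Nn := ((N : ℕ+) : ℕ) with hNn
      have hNn0 : Nn ≠ 0 := N.2.ne'
      set N' := ordCompl[p] Nn with hN'
      have hcop : Nat.Coprime p N' := Nat.coprime_ordCompl hp hNn0
      obtain ⟨y, hy1, hy2⟩ := Nat.chineseRemainder hcop X 1
      have hy0 : y ≠ 0 := by
        intro h
        rw [h] at hy1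
        exact hpX ((Nat.modEq_zero_iff_dvd).mp hy1.symm)
      set yP : ℕ+ := ⟨y, Nat.pos_of_ne_zero hy0⟩ with hyP
      have hyN : Nat.Coprime Nn y := by
        by_contra hg
        set q := (Nat.gcd Nn y).minFac with hq
        have hqp : q.Prime := Nat.minFac_prime hg
        have hqN : q ∣ Nn := (Nat.minFac_dvd _).trans (Nat.gcd_dvd_left _ _)
        have hqy : q ∣ y := (Nat.minFac_dvd _).trans (Nat.gcd_dvd_right _ _)
        have hsplit : q ∣ ordProj[p] Nn * N' := by
          rw [Nat.ordProj_mul_ordCompl_eq_self]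
          exact hqN
        rcases (Nat.Prime.dvd_mul hqp).mp hsplit with h' | h'
        · have hqp' : q = p :=
            (Nat.prime_dvd_prime_iff_eq hqp hp).mp (Nat.Prime.dvd_of_dvd_pow hqp h')
          have hpy : p ∣ y := hqp' ▸ hqy
          exact hpX ((Nat.modEq_zero_iff_dvd).mp
            (hy1.symm.trans ((Nat.modEq_zero_iff_dvd).mpr hpy)))
        · have hdvd1 : N' ∣ y - 1 :=
            (Nat.modEq_iff_dvd' (Nat.one_le_iff_ne_zero.mpr hy0)).mp hy2.symm
          have h1 : q ∣ y - 1 := h'.trans hdvd1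
          have hsub := Nat.dvd_sub hqy h1
          rw [Nat.sub_sub_self (Nat.one_le_iff_ne_zero.mpr hy0)] at hsub
          exact hqp.ne_one (Nat.dvd_one.mp hsub)
      have hymem : yP ∈ sigmaSet N := hyN
      have hcpf : Nat.Coprime p ((f yP : ℕ+) : ℕ) := hN hymem
      have hmod : ((f yP : ℕ+) : ℕ) ≡ ((f x₀ : ℕ+) : ℕ) [MOD p] := by
        rw [ha yP, ha x₀]
        exact modEq_sum _ _ _ (fun k _ => (hy1.pow k).mul_left (a k))
      have hpfy : p ∣ ((f yP : ℕ+) : ℕ) :=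
        (Nat.modEq_zero_iff_dvd).mp (hmod.trans ((Nat.modEq_zero_iff_dvd).mpr hpfx0))
      exact (hp.coprime_iff_not_dvd.mp hcpf) hpfy
  · rintro ⟨aa, nn, hmono⟩
    have hf' : f = fun x => aa * x ^ nn := funext hmono
    rw [hf']
    show Continuous[tauM, TopologicalSpace.generateFrom (Set.range sigmaSet)] _
    rw [continuous_generateFrom_iff]
    rintro s ⟨N, rfl⟩
    by_cases hca : Nat.Coprime (N : ℕ) (aa : ℕ)
    · rcases Nat.eq_zero_or_pos nn with hn0 | hn0
      · have huniv : (fun x : ℕ+ => aa * x ^ nn) ⁻¹' sigmaSet N = Set.univ := by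
          ext x
          simp only [Set.mem_preimage, Set.mem_univ, iff_true, hn0, pow_zero, mul_one]
          exact hca
        rw [huniv]
        exact TopologicalSpace.GenerateOpen.univ
      · have hsig : (fun x : ℕ+ => aa * x ^ nn) ⁻¹' sigmaSet N = sigmaSet N := by
          ext x
          show Nat.Coprime (N : ℕ) ((aa * x ^ nn : ℕ+) : ℕ) ↔ Nat.Coprime (N : ℕ) (x : ℕ)
          rw [PNat.mul_coe, PNat.pow_coe, Nat.coprime_mul_iff_right,
            Nat.coprime_pow_right_iff hn0]
          exact and_iff_right hca
        rw [hsig]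
        exact isOpen_sigmaSet N
    · have hemp : (fun x : ℕ+ => aa * x ^ nn) ⁻¹' sigmaSet N = ∅ := by
        ext x
        simp only [Set.mem_preimage, Set.mem_empty_iff_false, iff_false]
        intro (h : Nat.Coprime (N : ℕ) ((aa * x ^ nn : ℕ+) : ℕ))
        rw [PNat.mul_coe, Nat.coprime_mul_iff_right] at h
        exact hca h.1
      rw [hemp]
      have hgen : TopologicalSpace.GenerateOpen (Set.range sigmaSet) (⋃₀ (∅ : Set (Set ℕ+))) :=
        TopologicalSpace.GenerateOpen.sUnion (∅ : Set (Set ℕ+))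
          (fun s hs => absurd hs (Set.notMem_empty s))
      rwa [Set.sUnion_empty] at hgen
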